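/- Let A, B, C ∈ ℝ^{n×n} with A invertible. If the spectral radius ρ(|CA⁻¹|·|B|) < 1, then for every F ∈ ℝ^{n×n} the new generalized absolute value matrix equation AX + B|CX| = F has exactly one solution X ∈ ℝ^{n×n}. -/

import Mathlib

open Matrix Filter Topology Function

/-- Componentwise absolute value of a real matrix. -/
noncomputable def matAbs {n : ℕ} (M : Matrix (Fin n) (Fin n) ℝ) : Matrix (Fin n) (Fin n) ℝ :=
  fun i j => |M i j|

/-- Spectral radius of a real square matrix: the supremum of |λ| over its complex
eigenvalues (the complex spectrum of the matrix viewed over ℂ). -/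
noncomputable def specRad {m : Type*} [Fintype m] [DecidableEq m]
    (M : Matrix m m ℝ) : ℝ :=
  sSup ((fun z : ℂ => ‖z‖) '' spectrum ℂ (M.map Complex.ofReal))

attribute [local instance] Matrix.linftyOpNormedAddCommGroup Matrix.linftyOpNormedRing
  Matrix.linftyOpNormedAlgebra

namespace NgavmeAux

variable {n : ℕ}

/-- Entrywise dominance implies linfty-norm dominance. -/
lemma nnnorm_le_of_entry_le (X Y : Matrix (Fin n) (Fin n) ℝ)
    (h : ∀ i j, |X i j| ≤ Y i j) : ‖X‖₊ ≤ ‖Y‖₊ := by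
  rw [Matrix.linfty_opNNNorm_def, Matrix.linfty_opNNNorm_def]
  have hb : ∀ i, (∑ j, ‖X i j‖₊) ≤ ∑ j, ‖Y i j‖₊ := by
    intro i
    refine Finset.sum_le_sum fun j _ => ?_
    rw [← NNReal.coe_le_coe]
    simpa [Real.norm_eq_abs] using (h i j).trans (le_abs_self _)
  exact Finset.sup_mono_fun fun i _ => hb i

lemma nnnorm_matAbs (X : Matrix (Fin n) (Fin n) ℝ) : ‖matAbs X‖₊ = ‖X‖₊ := by
  rw [Matrix.linfty_opNNNorm_def, Matrix.linfty_opNNNorm_def]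
  simp [matAbs, Real.nnnorm_abs]

/-- Entrywise bound on a product. -/
lemma abs_mul_entry_le (P Q : Matrix (Fin n) (Fin n) ℝ) (i j : Fin n) :
    |(P * Q) i j| ≤ (matAbs P * matAbs Q) i j := by
  simp only [Matrix.mul_apply, matAbs]
  refine (Finset.abs_sum_le_sum_abs _ _).trans ?_
  exact Finset.sum_le_sum fun l _ => by rw [abs_mul]

lemma matAbs_nonneg (P : Matrix (Fin n) (Fin n) ℝ) (i j : Fin n) : 0 ≤ matAbs P i j :=
  abs_nonneg _

lemma mul_entry_nonneg {P Q : Matrix (Fin n) (Fin n) ℝ}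
    (hP : ∀ i j, 0 ≤ P i j) (hQ : ∀ i j, 0 ≤ Q i j) (i j : Fin n) : 0 ≤ (P * Q) i j := by
  rw [Matrix.mul_apply]
  exact Finset.sum_nonneg fun l _ => mul_nonneg (hP i l) (hQ l j)

lemma mul_entry_mono_right {P Q Q' : Matrix (Fin n) (Fin n) ℝ}
    (hP : ∀ i j, 0 ≤ P i j) (h : ∀ i j, Q i j ≤ Q' i j) (i j : Fin n) :
    (P * Q) i j ≤ (P * Q') i j := by
  rw [Matrix.mul_apply, Matrix.mul_apply]
  exact Finset.sum_le_sum fun l _ => mul_le_mul_of_nonneg_left (h l j) (hP i l)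

lemma mul_entry_mono_left {P P' Q : Matrix (Fin n) (Fin n) ℝ}
    (hQ : ∀ i j, 0 ≤ Q i j) (h : ∀ i j, P i j ≤ P' i j) (i j : Fin n) :
    (P * Q) i j ≤ (P' * Q) i j := by
  rw [Matrix.mul_apply, Matrix.mul_apply]
  exact Finset.sum_le_sum fun l _ => mul_le_mul_of_nonneg_right (h i l) (hQ l j)

/-- Existence of a power with small norm, from spectral radius `< 1`. -/
lemma exists_pow_nnnorm_lt_one (M : Matrix (Fin n) (Fin n) ℝ)
    (h : specRad M < 1) : ∃ k, 0 < k ∧ ‖M ^ k‖₊ < 1 := by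
  set Mc := M.map Complex.ofReal with hMc
  have hsr : spectralRadius ℂ Mc < 1 := by
    have hb : BddAbove ((fun z : ℂ => ‖z‖) '' spectrum ℂ Mc) :=
      ((spectrum.isCompact Mc).image continuous_norm).bddAbove
    refine lt_of_le_of_lt (iSup₂_le fun z hz => ?_) (ENNReal.ofReal_lt_one.mpr h)
    have hz1 : ‖z‖ ≤ specRad M := le_csSup hb ⟨z, hz, rfl⟩
    rw [← enorm_eq_nnnorm, ← ofReal_norm]
    exact ENNReal.ofReal_le_ofReal hz1
  have hten := spectrum.pow_nnnorm_pow_one_div_tendsto_nhds_spectralRadius Mc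
  have hev : ∀ᶠ k : ℕ in atTop, (‖Mc ^ k‖₊ : ENNReal) ^ (1 / (k : ℝ)) < 1 :=
    hten.eventually_lt_const hsr
  obtain ⟨k, hk1, hk⟩ := (hev.and (eventually_ge_atTop 1)).exists
  refine ⟨k, hk, ?_⟩
  have hkpos : (0:ℝ) < k := by exact_mod_cast hk
  have : ((‖Mc ^ k‖₊ : ENNReal) ^ (1 / (k : ℝ))) ^ (k : ℝ) < 1 :=
    ENNReal.rpow_lt_one hk1 hkpos
  rw [← ENNReal.rpow_mul, one_div, inv_mul_cancel₀ (ne_of_gt hkpos), ENNReal.rpow_one] at this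
  have hmap : Mc ^ k = (M ^ k).map Complex.ofReal := by
    rw [hMc]; exact (map_pow (Complex.ofRealHom.mapMatrix (m := Fin n)) M k).symm
  have hnorm : ‖Mc ^ k‖₊ = ‖M ^ k‖₊ := by
    rw [hmap, Matrix.linfty_opNNNorm_def, Matrix.linfty_opNNNorm_def]
    simp [Matrix.map_apply]
  rw [hnorm] at this
  exact_mod_cast this

end NgavmeAux

open NgavmeAux in
/-- If A is invertible and ρ(|CA⁻¹|·|B|) < 1, then for every F the NGAVME
AX + B|CX| = F has exactly one solution. -/
theorem ngavme_unique_of_specRad_prod {n : ℕ} (A B C : Matrix (Fin n) (Fin n) ℝ)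
    (hA : IsUnit A) (h : specRad (matAbs (C * A⁻¹) * matAbs B) < 1) :
    ∀ F : Matrix (Fin n) (Fin n) ℝ,
      ∃! X : Matrix (Fin n) (Fin n) ℝ, A * X + B * matAbs (C * X) = F := by
  intro F
  have hdet : IsUnit A.det := (Matrix.isUnit_iff_isUnit_det A).mp hA
  have hAAinv : A * A⁻¹ = 1 := Matrix.mul_nonsing_inv A hdet
  have hAinvA : A⁻¹ * A = 1 := Matrix.nonsing_inv_mul A hdet
  set M : Matrix (Fin n) (Fin n) ℝ := matAbs (C * A⁻¹) * matAbs B with hMdef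
  set H : Matrix (Fin n) (Fin n) ℝ := C * A⁻¹ * B with hHdef
  set G : Matrix (Fin n) (Fin n) ℝ := C * A⁻¹ * F with hGdef
  set T : Matrix (Fin n) (Fin n) ℝ → Matrix (Fin n) (Fin n) ℝ :=
    fun Z => matAbs (G - H * Z) with hTdef
  -- M has nonnegative entries, as do its powers
  have hMnn : ∀ i j, 0 ≤ M i j :=
    mul_entry_nonneg (matAbs_nonneg _) (matAbs_nonneg _)
  have hMpow : ∀ k : ℕ, ∀ i j, 0 ≤ (M ^ k) i j := by
    intro k
    induction k with
    | zero => intro i j; simp [Matrix.one_apply]; positivity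
    | succ k ih => rw [pow_succ]; exact mul_entry_nonneg ih hMnn
  -- |H| ≤ M entrywise
  have hHM : ∀ i j, matAbs H i j ≤ M i j := fun i j => abs_mul_entry_le (C * A⁻¹) B i j
  -- one-step entrywise contraction estimate
  have step : ∀ Z Z' : Matrix (Fin n) (Fin n) ℝ, ∀ i j,
      |(T Z - T Z') i j| ≤ (M * matAbs (Z - Z')) i j := by
    intro Z Z' i j
    have h1 : (T Z - T Z') i j = |(G - H * Z) i j| - |(G - H * Z') i j| := by
      simp [hTdef, matAbs, Matrix.sub_apply]
    have h2 : (G - H * Z) i j - (G - H * Z') i j = (H * (Z' - Z)) i j := by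
      have : G - H * Z - (G - H * Z') = H * (Z' - Z) := by noncomm_ring
      calc (G - H * Z) i j - (G - H * Z') i j = (G - H * Z - (G - H * Z')) i j := by
            simp [Matrix.sub_apply]
        _ = (H * (Z' - Z)) i j := by rw [this]
    have h3 : |(T Z - T Z') i j| ≤ |(H * (Z' - Z)) i j| := by
      rw [h1, ← h2]
      exact abs_abs_sub_abs_le_abs_sub _ _
    refine h3.trans ?_
    refine (abs_mul_entry_le H (Z' - Z) i j).trans ?_
    have habs : matAbs (Z' - Z) = matAbs (Z - Z') := by
      funext i j; simp [matAbs, Matrix.sub_apply, abs_sub_comm]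
    rw [habs]
    exact mul_entry_mono_left (fun i j => matAbs_nonneg _ i j) hHM i j
  -- iterated entrywise estimate
  have iter : ∀ k : ℕ, ∀ Z Z' : Matrix (Fin n) (Fin n) ℝ, ∀ i j,
      |(T^[k] Z - T^[k] Z') i j| ≤ ((M ^ k) * matAbs (Z - Z')) i j := by
    intro k
    induction k with
    | zero =>
      intro Z Z' i j
      simp only [Function.iterate_zero, id_eq, pow_zero, Matrix.one_mul]
      exact le_of_eq (by simp [matAbs, Matrix.sub_apply])
    | succ k ih =>
      intro Z Z' i j
      rw [Function.iterate_succ_apply, Function.iterate_succ_apply]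
      refine (ih (T Z) (T Z') i j).trans ?_
      have h4 : ∀ i j, matAbs (T Z - T Z') i j ≤ (M * matAbs (Z - Z')) i j := fun i j =>
        step Z Z' i j
      calc ((M ^ k) * matAbs (T Z - T Z')) i j
          ≤ ((M ^ k) * (M * matAbs (Z - Z'))) i j :=
            mul_entry_mono_right (hMpow k) h4 i j
        _ = ((M ^ (k + 1)) * matAbs (Z - Z')) i j := by
            rw [← Matrix.mul_assoc (M ^ k) M (matAbs (Z - Z')), ← pow_succ]
  -- Lipschitz estimate for iterates
  have lip : ∀ k : ℕ, LipschitzWith ‖M ^ k‖₊ (T^[k]) := by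
    intro k
    refine LipschitzWith.of_dist_le_mul fun Z Z' => ?_
    have h5 : ‖T^[k] Z - T^[k] Z'‖₊ ≤ ‖(M ^ k) * matAbs (Z - Z')‖₊ :=
      nnnorm_le_of_entry_le _ _ (iter k Z Z')
    have h6 : ‖(M ^ k) * matAbs (Z - Z')‖₊ ≤ ‖M ^ k‖₊ * ‖matAbs (Z - Z')‖₊ :=
      nnnorm_mul_le _ _
    have h7 : ‖matAbs (Z - Z')‖₊ = ‖Z - Z'‖₊ := nnnorm_matAbs _
    rw [dist_eq_norm, dist_eq_norm]
    have := (h5.trans h6).trans (le_of_eq (by rw [h7]))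
    calc ‖T^[k] Z - T^[k] Z'‖ = ((‖T^[k] Z - T^[k] Z'‖₊ : ℝ)) := rfl
      _ ≤ ((‖M ^ k‖₊ * ‖Z - Z'‖₊ : NNReal) : ℝ) := by exact_mod_cast this
      _ = (‖M ^ k‖₊ : ℝ) * ‖Z - Z'‖ := by push_cast; rfl
  -- get a contracting iterate
  obtain ⟨k, hkpos, hk⟩ := exists_pow_nnnorm_lt_one M h
  have hc : ContractingWith ‖M ^ k‖₊ (T^[k]) := ⟨hk, lip k⟩
  haveI : Nonempty (Matrix (Fin n) (Fin n) ℝ) := ⟨0⟩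
  set Z₀ := ContractingWith.fixedPoint (T^[k]) hc with hZ₀def
  have hfix : Function.IsFixedPt (T^[k]) Z₀ := hc.fixedPoint_isFixedPt
  have hTZ₀ : T Z₀ = Z₀ := by
    have h8 : Function.IsFixedPt (T^[k]) (T Z₀) := by
      show T^[k] (T Z₀) = T Z₀
      rw [← Function.iterate_succ_apply, Function.iterate_succ_apply']
      rw [hfix]
    exact hc.fixedPoint_unique h8
  -- the solution
  set X₀ : Matrix (Fin n) (Fin n) ℝ := A⁻¹ * (F - B * Z₀) with hX₀def
  have hCX₀ : C * X₀ = G - H * Z₀ := by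
    rw [hX₀def, hGdef, hHdef]; noncomm_ring
  have habsCX₀ : matAbs (C * X₀) = Z₀ := by
    rw [hCX₀]; exact hTZ₀
  refine ⟨X₀, ?_, ?_⟩
  · show A * X₀ + B * matAbs (C * X₀) = F
    have hAX₀ : A * X₀ = F - B * Z₀ := by
      rw [hX₀def, ← Matrix.mul_assoc, hAAinv, Matrix.one_mul]
    rw [habsCX₀, hAX₀]
    abel
  · intro X hX
    set Z : Matrix (Fin n) (Fin n) ℝ := matAbs (C * X) with hZdef
    have hax : A * X = F - B * Z := eq_sub_of_add_eq hX
    have hXeq : X = A⁻¹ * (F - B * Z) := by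
      rw [← hax, ← Matrix.mul_assoc, hAinvA, Matrix.one_mul]
    have hTZ : T Z = Z := by
      have h9 : G - H * Z = C * X := by
        rw [hXeq, hGdef, hHdef]; noncomm_ring
      show matAbs (G - H * Z) = Z
      rw [h9, hZdef]
    have h10 : Function.IsFixedPt (T^[k]) Z := (Function.IsFixedPt.iterate hTZ k)
    have hZZ₀ : Z = Z₀ := hc.fixedPoint_unique h10
    rw [hXeq, hZZ₀, ← hX₀def]
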